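/- Let d : ℝ → ℝ be an additive function and let α, β ∈ ℝ satisfy -π < 2α < β and α < 2β < π. If d(tan(x)) = (1/cos²(x))·d(x) holds for all x ∈ (α, β) (where cos(x) ≠ 0), then d is a standard derivation. -/

import Mathlib

open Real Set

private lemma dq_mul (d : ℝ → ℝ) (hd : ∀ x y : ℝ, d (x + y) = d x + d y)
    (q : ℚ) (x : ℝ) : d ((q : ℝ) * x) = (q : ℝ) * d x := by
  have := map_ratCast_smul (AddMonoidHom.mk' d hd) ℝ ℝ q x
  simpa [smul_eq_mul] using this

private lemma d_zero (d : ℝ → ℝ) (hd : ∀ x y : ℝ, d (x + y) = d x + d y) : d 0 = 0 := by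
  have := hd 0 0; simpa using this

private lemma d_neg (d : ℝ → ℝ) (hd : ∀ x y : ℝ, d (x + y) = d x + d y) (x : ℝ) :
    d (-x) = - d x := by
  have := hd x (-x); simp [d_zero d hd] at this; linarith

private lemma d_sub (d : ℝ → ℝ) (hd : ∀ x y : ℝ, d (x + y) = d x + d y) (x y : ℝ) :
    d (x - y) = d x - d y := by
  have := hd (x - y) y; simp at this; linarith

private lemma recip_flip (d : ℝ → ℝ) (hd : ∀ x y : ℝ, d (x + y) = d x + d y)
    (c1 c2 : ℝ)
    (hrec : ∀ y : ℝ, c1 < y → y < c2 → d (1 / y) = -(d y) / y ^ 2) :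
    ∀ y : ℝ, -c2 < y → y < -c1 → d (1 / y) = -(d y) / y ^ 2 := by
  intro y hy1 hy2
  have h := hrec (-y) (by linarith) (by linarith)
  have e1 : (1 : ℝ) / y = -(1 / -y) := by ring
  rw [e1, d_neg d hd, h, d_neg d hd]
  ring

private lemma recip_global (d : ℝ → ℝ) (hd : ∀ x y : ℝ, d (x + y) = d x + d y)
    (c1 c2 : ℝ) (hc1 : 0 < c1) (hc12 : c1 < c2)
    (hrec : ∀ y : ℝ, c1 < y → y < c2 → d (1 / y) = -(d y) / y ^ 2) :
    ∀ t : ℝ, t ≠ 0 → d (1 / t) = -(d t) / t ^ 2 := by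
  have hpos : ∀ t : ℝ, 0 < t → d (1 / t) = -(d t) / t ^ 2 := by
    intro t ht
    have hcc : t / c2 < t / c1 := by
      apply div_lt_div_of_pos_left ht hc1 hc12
    obtain ⟨q, hq1, hq2⟩ := exists_rat_btwn hcc
    have hq0 : (0 : ℝ) < (q : ℝ) := lt_trans (div_pos ht (lt_trans hc1 hc12)) hq1
    set y : ℝ := t / (q : ℝ) with hy
    have hy1 : c1 < y := by
      rw [hy, lt_div_iff₀ hq0]
      rw [lt_div_iff₀ hc1] at hq2
      nlinarith
    have hy2 : y < c2 := by
      rw [hy, div_lt_iff₀ hq0]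
      rw [div_lt_iff₀ (lt_trans hc1 hc12)] at hq1
      nlinarith
    have hy0 : 0 < y := div_pos ht hq0
    have hrel := hrec y hy1 hy2
    have hty : t = (q : ℝ) * y := by
      rw [hy]
      field_simp
    have hdt : d t = (q : ℝ) * d y := by rw [hty, dq_mul d hd]
    have hinv : 1 / t = ((q⁻¹ : ℚ) : ℝ) * (1 / y) := by
      push_cast
      rw [hty]
      field_simp
    rw [hinv, dq_mul d hd, hrel, hdt, hty]
    push_cast
    field_simp
  intro t ht
  rcases lt_or_gt_of_ne ht with h | h
  · have e1 : (1 : ℝ) / t = -(1 / -t) := by ring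
    rw [e1, d_neg d hd, hpos (-t) (by linarith), d_neg d hd]
    ring
  · exact hpos t h

private lemma d_sq (d : ℝ → ℝ) (hd : ∀ x y : ℝ, d (x + y) = d x + d y)
    (d1 : d 1 = 0)
    (hrec : ∀ t : ℝ, t ≠ 0 → d (1 / t) = -(d t) / t ^ 2) :
    ∀ x : ℝ, d (x ^ 2) = 2 * x * d x := by
  intro x
  rcases eq_or_ne x 0 with rfl | hx0
  · simpa using d_zero d hd
  rcases eq_or_ne x 1 with rfl | hx1
  · simp [d1]
  have h1x : (1 : ℝ) - x ≠ 0 := fun hc => hx1 (by linarith)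
  have hxx : x - x ^ 2 ≠ 0 := by
    have : x - x ^ 2 = x * (1 - x) := by ring
    rw [this]
    exact mul_ne_zero hx0 h1x
  have e1 := hrec x hx0
  have e2 := hrec (1 - x) h1x
  have e3 := hrec (x - x ^ 2) hxx
  have key : 1 / (x - x ^ 2) = 1 / x + 1 / (1 - x) := by
    field_simp
    ring
  have esum : d (1 / (x - x ^ 2)) = d (1 / x) + d (1 / (1 - x)) := by
    rw [key]; exact hd _ _
  have hxm : d (x - x ^ 2) = d x - d (x ^ 2) := d_sub d hd _ _
  have h1mx : d (1 - x) = - d x := by rw [d_sub d hd, d1]; ring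
  rw [e1, e2, e3, hxm, h1mx] at esum
  have h2 : (x - x ^ 2) ^ 2 ≠ 0 := pow_ne_zero _ hxx
  have h3 : (x : ℝ) ^ 2 ≠ 0 := pow_ne_zero _ hx0
  have h4 : ((1 : ℝ) - x) ^ 2 ≠ 0 := pow_ne_zero _ h1x
  field_simp at esum
  have hz : (d (x ^ 2) - 2 * x * d x) * (x ^ 2 * (1 - x) ^ 2) = 0 := by
    linear_combination (x ^ 2 * (1 - x) ^ 2) * esum
  rcases mul_eq_zero.mp hz with h | h
  · linarith
  · exact absurd h (mul_ne_zero h3 h4)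

private lemma key2 (d : ℝ → ℝ) (hd : ∀ x y : ℝ, d (x + y) = d x + d y)
    (α β : ℝ) (hαπ : -(π/2) < α) (hβπ : β < π/2)
    (h : ∀ x ∈ Set.Ioo α β, Real.cos x ≠ 0 →
      d (Real.tan x) = (1 / (Real.cos x) ^ 2) * d x)
    (x y : ℝ) (hx : x ∈ Set.Ioo α β) (hy : y ∈ Set.Ioo α β)
    (hxy : x + y ∈ Set.Ioo α β) :
    1 - tan x * tan y ≠ 0 ∧
      (1 - tan x * tan y) ^ 2 * d ((tan x + tan y) / (1 - tan x * tan y))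
        = (1 + tan y ^ 2) * d (tan x) + (1 + tan x ^ 2) * d (tan y) := by
  have hcos : ∀ z : ℝ, z ∈ Set.Ioo α β → 0 < cos z := by
    intro z hz
    exact cos_pos_of_mem_Ioo ⟨by linarith [hz.1], by linarith [hz.2]⟩
  have hcx := hcos x hx
  have hcy := hcos y hy
  have hcxy := hcos (x + y) hxy
  have hkey : ∀ z : ℝ, z ∈ Set.Ioo α β → d (tan z) = (1 + tan z ^ 2) * d z := by
    intro z hz
    rw [h z hz (hcos z hz).ne', one_div, ← inv_one_add_tan_sq (hcos z hz).ne', inv_inv]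
  have hcc : cos x * cos y * (1 - tan x * tan y) = cos (x + y) := by
    rw [tan_eq_sin_div_cos, tan_eq_sin_div_cos, cos_add]
    field_simp
  have habne : 1 - tan x * tan y ≠ 0 := by
    intro h0
    rw [h0, mul_zero] at hcc
    exact hcxy.ne' hcc.symm
  have t1 : tan (x + y) * (1 - tan x * tan y) = tan x + tan y := by
    have hne2 : cos x * cos y - sin x * sin y ≠ 0 := by
      rw [← cos_add]; exact hcxy.ne'
    rw [tan_eq_sin_div_cos, tan_eq_sin_div_cos, tan_eq_sin_div_cos, sin_add, cos_add]
    rw [div_mul_eq_mul_div, div_eq_iff hne2]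
    field_simp
  have ex : (1 + tan x ^ 2) = (cos x ^ 2)⁻¹ := by
    rw [← inv_one_add_tan_sq hcx.ne', inv_inv]
  have ey : (1 + tan y ^ 2) = (cos y ^ 2)⁻¹ := by
    rw [← inv_one_add_tan_sq hcy.ne', inv_inv]
  have exy : (1 + tan (x + y) ^ 2) = (cos (x + y) ^ 2)⁻¹ := by
    rw [← inv_one_add_tan_sq hcxy.ne', inv_inv]
  have t2 : (1 + tan (x + y) ^ 2) * (1 - tan x * tan y) ^ 2
      = (1 + tan x ^ 2) * (1 + tan y ^ 2) := by
    rw [ex, ey, exy, ← hcc]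
    field_simp
  have t3 : tan (x + y) = (tan x + tan y) / (1 - tan x * tan y) := by
    rw [eq_div_iff habne]; exact t1
  have E : d (tan (x + y)) = (1 + tan (x + y) ^ 2) * (d x + d y) := by
    rw [hkey (x + y) hxy, hd]
  refine ⟨habne, ?_⟩
  rw [← t3, E, hkey x hx, hkey y hy]
  linear_combination (d x + d y) * t2

set_option maxHeartbeats 1000000 in
/-- If an additive function `d` derivates `tan` on `(α, β)` (wherever `cos` does not
vanish) with `-π < 2α < β` and `α < 2β < π`, then `d` is a standard derivation. -/
theorem stmt_15 (d : ℝ → ℝ) (hd : ∀ x y : ℝ, d (x + y) = d x + d y)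
    (α β : ℝ) (h1 : -Real.pi < 2 * α) (h2 : 2 * α < β)
    (h3 : α < 2 * β) (h4 : 2 * β < Real.pi)
    (h : ∀ x ∈ Set.Ioo α β, Real.cos x ≠ 0 →
      d (Real.tan x) = (1 / (Real.cos x) ^ 2) * d x) :
    ∀ x y : ℝ, d (x * y) = d x * y + x * d y := by
  have hπ := Real.pi_pos
  have hαπ : -(π/2) < α := by linarith
  have hβπ : β < π/2 := by linarith
  have hαβ : α < β := by linarith
  set m := max α (α/2) with hm
  set M := min β (β/2) with hM
  have hmM : m < M := by
    apply max_lt <;> apply lt_min <;> linarith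
  have hαm : α ≤ m := le_max_left _ _
  have hα2m : α ≤ 2*m := by have := le_max_right α (α/2); linarith
  have hMβ : M ≤ β := min_le_left _ _
  have h2Mβ : 2*M ≤ β := by have := min_le_right β (β/2); linarith
  have hmπ : -(π/2) < m := lt_of_lt_of_le hαπ hαm
  have hMπ : M < π/2 := lt_of_le_of_lt hMβ hβπ
  have hmem : ∀ x : ℝ, m < x → x < M → x ∈ Set.Ioo α β := by
    intro x hx1 hx2
    exact ⟨by linarith, by linarith⟩
  have hmem2 : ∀ x y : ℝ, m < x → x < M → m < y → y < M → x + y ∈ Set.Ioo α β := by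
    intro x y hx1 hx2 hy1 hy2
    exact ⟨by linarith, by linarith⟩
  have hK := key2 d hd α β hαπ hβπ h
  have harc : ∀ v : ℝ, tan m < v → v < tan M →
      m < arctan v ∧ arctan v < M ∧ tan (arctan v) = v := by
    intro v h1v h2v
    refine ⟨?_, ?_, tan_arctan v⟩
    · have := arctan_strictMono h1v
      rwa [arctan_tan hmπ (lt_trans hmM hMπ)] at this
    · have := arctan_strictMono h2v
      rwa [arctan_tan (lt_trans hmπ hmM) hMπ] at this
  -- pick a nonzero rational u with tan m < u < tan M
  have hmid1 : m < (m + M)/2 := by linarith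
  have hmid2 : (m + M)/2 < M := by linarith
  have htm1 : tan m < tan ((m + M)/2) :=
    tan_lt_tan_of_lt_of_lt_pi_div_two hmπ (by linarith) hmid1
  have htm2 : tan ((m + M)/2) < tan M :=
    tan_lt_tan_of_lt_of_lt_pi_div_two (by linarith) hMπ hmid2
  obtain ⟨u, hu0, hu1, hu2⟩ : ∃ u : ℚ, (u:ℝ) ≠ 0 ∧ tan m < (u:ℝ) ∧ (u:ℝ) < tan M := by
    obtain ⟨q1, hq11, hq12⟩ := exists_rat_btwn htm1
    obtain ⟨q2, hq21, hq22⟩ := exists_rat_btwn htm2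
    rcases eq_or_ne (q1:ℝ) 0 with hq10 | hq10
    · exact ⟨q2, by rw [← hq10]; exact ne_of_gt (lt_trans hq12 hq21),
        lt_trans (lt_trans hq11 hq12) hq21, hq22⟩
    · exact ⟨q1, hq10, hq11, lt_trans hq12 htm2⟩
  obtain ⟨hx₀1, hx₀2, htx₀⟩ := harc (u:ℝ) hu1 hu2
  set x₀ := arctan ((u:ℝ)) with hx₀
  -- d 1 = 0
  have d1 : d 1 = 0 := by
    obtain ⟨hne, heq⟩ := hK x₀ x₀ (hmem _ hx₀1 hx₀2) (hmem _ hx₀1 hx₀2)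
      (hmem2 _ _ hx₀1 hx₀2 hx₀1 hx₀2)
    rw [htx₀] at hne heq
    have hcast : ((1 - u*u : ℚ) : ℝ) = 1 - (u:ℝ)*(u:ℝ) := by push_cast; ring
    have hq' : (((2*u/(1-u*u)) : ℚ) : ℝ) = ((u:ℝ)+(u:ℝ))/(1-(u:ℝ)*(u:ℝ)) := by
      push_cast
      ring
    have hdq' := dq_mul d hd (2*u/(1-u*u)) 1
    rw [mul_one, hq'] at hdq'
    have hdu : d (u:ℝ) = (u:ℝ) * d 1 := by simpa using dq_mul d hd u 1
    rw [hdq', hdu] at heq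
    have lhs : (1-(u:ℝ)*(u:ℝ))^2 * (((u:ℝ)+(u:ℝ))/(1-(u:ℝ)*(u:ℝ)) * d 1)
        = (1-(u:ℝ)*(u:ℝ))*((u:ℝ)+(u:ℝ))*d 1 := by
      field_simp
    rw [lhs] at heq
    have h40 : (4:ℝ)*(u:ℝ)^3 * d 1 = 0 := by linear_combination -heq
    rcases mul_eq_zero.mp h40 with hc | hc
    · exfalso
      rcases mul_eq_zero.mp hc with hc' | hc'
      · norm_num at hc'
      · exact pow_ne_zero 3 hu0 hc'
    · exact hc
  have dQ0 : ∀ q : ℚ, d (q:ℝ) = 0 := by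
    intro q
    simpa [d1] using dq_mul d hd q 1
  -- local reciprocal relation
  have hloc : ∀ a : ℝ, tan m < a → a < tan M →
      1 - a * (u:ℝ) ≠ 0 ∧
        d (1/(1 - a * (u:ℝ))) = -(d (1 - a * (u:ℝ))) / (1 - a * (u:ℝ))^2 := by
    intro a ha1 ha2
    obtain ⟨hxa1, hxa2, hta⟩ := harc a ha1 ha2
    obtain ⟨hne, heq⟩ := hK (arctan a) x₀ (hmem _ hxa1 hxa2) (hmem _ hx₀1 hx₀2)
      (hmem2 _ _ hxa1 hxa2 hx₀1 hx₀2)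
    rw [hta, htx₀] at hne heq
    rw [dQ0 u] at heq
    have hsplit : (a + (u:ℝ))/(1 - a*(u:ℝ))
        = ((-1/u : ℚ):ℝ) + (((1+u^2)/u : ℚ):ℝ) * (1/(1 - a*(u:ℝ))) := by
      push_cast
      field_simp
      ring
    have hds : d ((a + (u:ℝ))/(1 - a*(u:ℝ)))
        = ((1+(u:ℝ)^2)/(u:ℝ)) * d (1/(1 - a*(u:ℝ))) := by
      rw [hsplit, hd, dQ0, dq_mul d hd]
      push_cast
      ring
    rw [hds] at heq
    have hda : d a = -(d (1 - a*(u:ℝ))) / (u:ℝ) := by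
      have ha : a = ((u⁻¹:ℚ):ℝ) * (1 - (1 - a * (u:ℝ))) := by
        push_cast
        field_simp
        ring
      rw [ha, dq_mul d hd, d_sub d hd, d1]
      push_cast
      field_simp
      rw [show (1:ℝ) - (1 - (1 - ↑u * a)) = 1 - ↑u * a by ring]
      ring
    rw [hda] at heq
    refine ⟨hne, ?_⟩
    rw [eq_div_iff (pow_ne_zero 2 hne)]
    field_simp at heq
    have h1u : (1:ℝ) + (u:ℝ)^2 ≠ 0 := by positivity
    apply mul_left_cancel₀ h1u
    linear_combination heq
  -- turn into an interval statement in w = 1 - a*u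
  have htmM : tan m < tan M := lt_trans htm1 htm2
  obtain ⟨e1, e2, he12, hrec2⟩ : ∃ e1 e2 : ℝ, e1 < e2 ∧ ∀ w : ℝ, e1 < w → w < e2 →
      w ≠ 0 ∧ d (1/w) = -(d w)/w^2 := by
    rcases lt_or_gt_of_ne hu0 with hu | hu
    · refine ⟨1 - tan m * (u:ℝ), 1 - tan M * (u:ℝ),
        by linarith [mul_lt_mul_of_neg_right htmM hu], ?_⟩
      intro w hw1 hw2
      have haw : ((1 - w)/(u:ℝ)) * (u:ℝ) = 1 - w := by field_simp
      have ha1 : tan m < (1 - w)/(u:ℝ) := by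
        by_contra hc
        push_neg at hc
        linarith [mul_le_mul_of_nonpos_right hc hu.le]
      have ha2 : (1 - w)/(u:ℝ) < tan M := by
        by_contra hc
        push_neg at hc
        linarith [mul_le_mul_of_nonpos_right hc hu.le]
      have hw : 1 - ((1 - w)/(u:ℝ)) * (u:ℝ) = w := by rw [haw]; ring
      have hres := hloc _ ha1 ha2
      rw [hw] at hres
      exact hres
    · refine ⟨1 - tan M * (u:ℝ), 1 - tan m * (u:ℝ),
        by linarith [mul_lt_mul_of_pos_right htmM hu], ?_⟩
      intro w hw1 hw2
      have haw : ((1 - w)/(u:ℝ)) * (u:ℝ) = 1 - w := by field_simp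
      have ha1 : tan m < (1 - w)/(u:ℝ) := by
        by_contra hc
        push_neg at hc
        linarith [mul_le_mul_of_nonneg_right hc hu.le]
      have ha2 : (1 - w)/(u:ℝ) < tan M := by
        by_contra hc
        push_neg at hc
        linarith [mul_le_mul_of_nonneg_right hc hu.le]
      have hw : 1 - ((1 - w)/(u:ℝ)) * (u:ℝ) = w := by rw [haw]; ring
      have hres := hloc _ ha1 ha2
      rw [hw] at hres
      exact hres
  have hsign : (0:ℝ) ≤ e1 ∨ e2 ≤ 0 := by
    by_contra hc
    push_neg at hc
    exact (hrec2 0 hc.1 hc.2).1 rfl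
  have hglob : ∀ t : ℝ, t ≠ 0 → d (1/t) = -(d t)/t^2 := by
    rcases hsign with he | he
    · exact recip_global d hd (e1 + (e2-e1)/4) (e2 - (e2-e1)/4) (by linarith) (by linarith)
        (fun y hy1 hy2 => (hrec2 y (by linarith) (by linarith)).2)
    · have hflip := recip_flip d hd e1 e2 (fun y hy1 hy2 => (hrec2 y hy1 hy2).2)
      exact recip_global d hd (-e2 + (e2-e1)/4) (-e1 - (e2-e1)/4) (by linarith) (by linarith)
        (fun y hy1 hy2 => hflip y (by linarith) (by linarith))
  have hsq := d_sq d hd d1 hglob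
  intro x y
  have hp1 : d ((x+y)^2) = 2*(x+y)*(d x + d y) := by rw [hsq (x+y), hd]
  have hp2 : d ((x+y)^2) = 2*x*d x + (2 * d (x*y) + 2*y*d y) := by
    rw [show (x+y)^2 = x^2 + ((x*y + x*y) + y^2) by ring, hd, hd, hd (x*y) (x*y),
      hsq x, hsq y]
    ring
  linear_combination hp1 / 2 - hp2 / 2
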